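/- Let G be a graph of degeneracy d on n vertices and k ≤ n/(d+1) a positive integer. Then the number of independent sets of size k in G is at least C(⌈n/(d+1)⌉, k), and hence the fraction of k-element vertex subsets of G that are independent sets is at least k^{-k}(d+1)^{-k}. -/

import Mathlib

open scoped Classical

private lemma pow_le_pow_mul_choose {m k : ℕ} (hkm : k ≤ m) :
    m ^ k ≤ k ^ k * m.choose k := by
  have key : m ^ k * k.factorial ≤ k ^ k * m.descFactorial k := by
    rw [← Nat.descFactorial_self, Nat.descFactorial_eq_prod_range,
      Nat.descFactorial_eq_prod_range,
      show m ^ k = ∏ _i ∈ Finset.range k, m by simp,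
      show k ^ k = ∏ _i ∈ Finset.range k, k by simp,
      ← Finset.prod_mul_distrib, ← Finset.prod_mul_distrib]
    refine Finset.prod_le_prod' ?_
    intro i hi
    have hik : i < k := Finset.mem_range.mp hi
    have h1 : m * (k - i) = m * k - m * i := by rw [Nat.mul_sub]
    have h2 : k * (m - i) = m * k - k * i := by
      rw [Nat.mul_sub]; ring_nf
    rw [h1, h2]
    have : k * i ≤ m * i := Nat.mul_le_mul_right i hkm
    omega
  rw [Nat.descFactorial_eq_factorial_mul_choose, ← mul_assoc, mul_comm (k ^ k) k.factorial,
    mul_assoc, mul_comm k.factorial] at key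
  exact Nat.le_of_mul_le_mul_right key k.factorial_pos

private lemma greedy_indep {V : Type} [Fintype V] [DecidableEq V]
    (G : SimpleGraph V) (d : ℕ)
    (hdeg : ∀ S : Finset V, S.Nonempty → ∃ v ∈ S, (S.filter (fun w => G.Adj v w)).card ≤ d) :
    ∀ S : Finset V, ∃ I : Finset V, I ⊆ S ∧ (∀ u ∈ I, ∀ v ∈ I, ¬ G.Adj u v) ∧
      (S.card + d) / (d + 1) ≤ I.card := by
  intro S
  induction S using Finset.strongInductionOn with
  | _ S ih =>
    rcases S.eq_empty_or_nonempty with rfl | hS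
    · exact ⟨∅, Finset.Subset.refl _, by simp, by simp [Nat.div_eq_of_lt]⟩
    · obtain ⟨v, hvS, hvd⟩ := hdeg S hS
      set T := S.filter (fun w => w ≠ v ∧ ¬ G.Adj v w) with hT
      have hTsub : T ⊂ S := by
        refine Finset.ssubset_iff_of_subset (Finset.filter_subset _ _) |>.mpr ⟨v, hvS, ?_⟩
        simp [hT]
      obtain ⟨I, hIT, hIind, hIcard⟩ := ih T hTsub
      refine ⟨insert v I, ?_, ?_, ?_⟩
      · intro x hx
        rcases Finset.mem_insert.mp hx with rfl | hx
        · exact hvS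
        · exact (Finset.filter_subset _ _) (hIT hx)
      · intro u hu w hw
        have hnb : ∀ x ∈ I, ¬ G.Adj v x := by
          intro x hx
          have := hIT hx
          rw [hT, Finset.mem_filter] at this
          exact this.2.2
        intro h
        rcases Finset.mem_insert.mp hu with hu | hu <;>
          rcases Finset.mem_insert.mp hw with hw | hw
        · rw [hu, hw] at h; exact G.irrefl h
        · exact hnb w hw (hu ▸ h)
        · exact hnb u hu (G.adj_symm (hw ▸ h))
        · exact hIind u hu w hw h
      · have hvI : v ∉ I := by
          intro hvI
          have := hIT hvI
          rw [hT, Finset.mem_filter] at this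
          exact this.2.1 rfl
        rw [Finset.card_insert_of_notMem hvI]
        -- S.card ≤ T.card + d + 1
        have hcov : S ⊆ insert v (T ∪ S.filter (fun w => G.Adj v w)) := by
          intro x hx
          by_cases hxv : x = v
          · simp [hxv]
          · by_cases hadj : G.Adj v x
            · simp [Finset.mem_insert, Finset.mem_union, Finset.mem_filter, hx, hadj]
            · simp [Finset.mem_insert, Finset.mem_union, hT, Finset.mem_filter, hx, hxv, hadj]
        have hSc : S.card ≤ T.card + d + 1 := by
          calc S.card ≤ (insert v (T ∪ S.filter (fun w => G.Adj v w))).card :=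
                Finset.card_le_card hcov
            _ ≤ (T ∪ S.filter (fun w => G.Adj v w)).card + 1 := Finset.card_insert_le _ _
            _ ≤ T.card + (S.filter (fun w => G.Adj v w)).card + 1 := by
                have := Finset.card_union_le T (S.filter (fun w => G.Adj v w))
                omega
            _ ≤ T.card + d + 1 := by omega
        have h1 : (S.card + d) / (d + 1) ≤ (T.card + d + (d + 1)) / (d + 1) :=
          Nat.div_le_div_right (by omega)
        rw [Nat.add_div_right _ (by omega)] at h1
        omega

/-- Let `G` have degeneracy at most `d` on `n` vertices and let `k` be a positive integer
with `k ≤ n/(d+1)`. Then the number of independent sets of size `k` in `G` is at least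
`C(⌈n/(d+1)⌉, k)`, and the fraction of `k`-element vertex subsets that are independent is
at least `k^{-k}·(d+1)^{-k}`. -/
theorem stmt18 {V : Type} [Fintype V] [DecidableEq V]
    (G : SimpleGraph V) (d k : ℕ)
    (hdeg : ∀ S : Finset V, S.Nonempty → ∃ v ∈ S, (S.filter (fun w => G.Adj v w)).card ≤ d)
    (hk : 0 < k) (hkn : k * (d + 1) ≤ Fintype.card V) :
    Nat.choose ((Fintype.card V + d) / (d + 1)) k ≤
        {s : Finset V | s.card = k ∧ ∀ u ∈ s, ∀ v ∈ s, ¬ G.Adj u v}.ncard ∧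
      (Nat.choose (Fintype.card V) k : ℚ) ≤
        (k : ℚ) ^ k * ((d : ℚ) + 1) ^ k *
          ({s : Finset V | s.card = k ∧ ∀ u ∈ s, ∀ v ∈ s, ¬ G.Adj u v}.ncard : ℚ) := by
  set n := Fintype.card V with hn
  set m := (n + d) / (d + 1) with hm
  obtain ⟨I, _, hIind, hIcard⟩ := greedy_indep G d hdeg Finset.univ
  rw [Finset.card_univ, ← hn, ← hm] at hIcard
  -- the set as a finset
  set F : Finset (Finset V) :=
    Finset.univ.filter (fun s : Finset V => s.card = k ∧ ∀ u ∈ s, ∀ v ∈ s, ¬ G.Adj u v) with hF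
  have hset : {s : Finset V | s.card = k ∧ ∀ u ∈ s, ∀ v ∈ s, ¬ G.Adj u v} = ↑F := by
    ext s; simp [hF]
  have hncard : {s : Finset V | s.card = k ∧ ∀ u ∈ s, ∀ v ∈ s, ¬ G.Adj u v}.ncard = F.card := by
    rw [hset, Set.ncard_coe_finset]
  have hsub : Finset.powersetCard k I ⊆ F := by
    intro s hs
    rw [Finset.mem_powersetCard] at hs
    rw [hF, Finset.mem_filter]
    exact ⟨Finset.mem_univ _, hs.2, fun u hu v hv => hIind u (hs.1 hu) v (hs.1 hv)⟩
  have hcount : m.choose k ≤ F.card := by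
    calc m.choose k ≤ I.card.choose k := Nat.choose_le_choose k hIcard
      _ = (Finset.powersetCard k I).card := (Finset.card_powersetCard k I).symm
      _ ≤ F.card := Finset.card_le_card hsub
  constructor
  · rw [hncard]; exact hcount
  · -- nat inequality first
    have hmd : n ≤ m * (d + 1) := by
      have h1 := Nat.mod_add_div (n + d) (d + 1)
      have h2 : (n + d) % (d + 1) < d + 1 := Nat.mod_lt _ (by omega)
      rw [hm, Nat.mul_comm]; omega
    have hkm : k ≤ m := by
      have : k * (d + 1) ≤ n + d := by omega
      rw [hm]
      exact Nat.le_div_iff_mul_le (by omega) |>.mpr this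
    have hnat : n.choose k ≤ k ^ k * (d + 1) ^ k * F.card := by
      calc n.choose k ≤ n ^ k := Nat.choose_le_pow n k
        _ ≤ (m * (d + 1)) ^ k := Nat.pow_le_pow_left hmd k
        _ = m ^ k * (d + 1) ^ k := mul_pow m (d + 1) k
        _ ≤ (k ^ k * m.choose k) * (d + 1) ^ k :=
            Nat.mul_le_mul_right _ (pow_le_pow_mul_choose hkm)
        _ = k ^ k * (d + 1) ^ k * m.choose k := by ring
        _ ≤ k ^ k * (d + 1) ^ k * F.card := Nat.mul_le_mul_left _ hcount
    rw [hncard]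
    calc (n.choose k : ℚ) ≤ ((k ^ k * (d + 1) ^ k * F.card : ℕ) : ℚ) := by exact_mod_cast hnat
      _ = (k : ℚ) ^ k * ((d : ℚ) + 1) ^ k * (F.card : ℚ) := by push_cast; ring
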